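/- The 6×6 qubit data table D (with 2×2 identity diagonal blocks and uniform 1/2 off-diagonal blocks, for X,Y,Z measurements on X,Y,Z eigenstates) has rank 4. Hence any ontological factorization of D requires Ω ≥ 4 ontic states. -/

import Mathlib

open Finset

/-- The 6×6 qubit data table: 2×2 identity diagonal blocks, uniform 1/2 off-diagonal blocks. -/
noncomputable def Dqubit : Matrix (Fin 6) (Fin 6) ℝ := fun i j =>
  if (i : ℕ) / 2 = (j : ℕ) / 2 then (if i = j then 1 else 0) else 1/2

noncomputable def Amat : Matrix (Fin 6) (Fin 4) ℝ := fun i k =>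
  if (i : ℕ) % 2 = 0 then (if (k : ℕ) = (i : ℕ) / 2 then 1 else 0)
  else (if (k : ℕ) = 3 then 1 else if (k : ℕ) = (i : ℕ) / 2 then -1 else 0)

noncomputable def Bmat : Matrix (Fin 4) (Fin 6) ℝ := fun k j =>
  if (k : ℕ) = 3 then 1
  else if (j : ℕ) / 2 = (k : ℕ) then (if (j : ℕ) = 2 * (k : ℕ) then 1 else 0) else 1/2

noncomputable def Lmat : Matrix (Fin 4) (Fin 6) ℝ := fun i j =>
  if (j : ℕ) = (if (i : ℕ) = 3 then 4 else (i : ℕ)) then 1 else 0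

noncomputable def Rmat : Matrix (Fin 6) (Fin 4) ℝ := fun i j =>
  if (i : ℕ) = 3 ∨ (i : ℕ) = 5 then 0
  else if (i : ℕ) ≤ 1 then
    (if (j : ℕ) = (i : ℕ) then 2 else if (j : ℕ) ≤ 1 then 1 else -1)
  else if (i : ℕ) = 2 then
    (if (j : ℕ) = 2 then 2 else if (j : ℕ) = 3 then 0 else -1)
  else
    (if (j : ℕ) = 3 then 2 else if (j : ℕ) = 2 then 0 else -1)

lemma f40 : ((0 : Fin 4) : ℕ) = 0 := rfl
lemma f41 : ((1 : Fin 4) : ℕ) = 1 := rfl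
lemma f42 : ((2 : Fin 4) : ℕ) = 2 := rfl
lemma f43 : ((3 : Fin 4) : ℕ) = 3 := rfl
lemma f60 : ((0 : Fin 6) : ℕ) = 0 := rfl
lemma f61 : ((1 : Fin 6) : ℕ) = 1 := rfl
lemma f62 : ((2 : Fin 6) : ℕ) = 2 := rfl
lemma f63 : ((3 : Fin 6) : ℕ) = 3 := rfl
lemma f64 : ((4 : Fin 6) : ℕ) = 4 := rfl
lemma f65 : ((5 : Fin 6) : ℕ) = 5 := rfl

lemma factAB : Dqubit = Amat * Bmat := by
  ext i j
  fin_cases i <;> fin_cases j <;>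
    norm_num [Dqubit, Amat, Bmat, Matrix.mul_apply, Fin.sum_univ_four,
      f40, f41, f42, f43, -Fin.val_eq_zero_iff]

set_option maxHeartbeats 1000000 in
lemma factLR : Lmat * Dqubit * Rmat = 1 := by
  ext i j
  fin_cases i <;> fin_cases j <;>
    norm_num [Dqubit, Lmat, Rmat, Matrix.mul_apply, Fin.sum_univ_six,
      Matrix.one_apply, Fin.ext_iff, f40, f41, f42, f43, f60, f61, f62, f63, f64, f65, -Fin.val_eq_zero_iff]

lemma rankD : Dqubit.rank = 4 := by
  have h1 : Dqubit.rank ≤ 4 := by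
    calc Dqubit.rank = (Amat * Bmat).rank := by rw [factAB]
    _ ≤ Amat.rank := Matrix.rank_mul_le_left Amat Bmat
    _ ≤ Fintype.card (Fin 4) := Amat.rank_le_card_width
    _ = 4 := by simp
  have h2 : 4 ≤ Dqubit.rank := by
    have : (Lmat * Dqubit * Rmat).rank = 4 := by rw [factLR, Matrix.rank_one, Fintype.card_fin]
    calc (4 : ℕ) = (Lmat * Dqubit * Rmat).rank := this.symm
    _ ≤ (Lmat * Dqubit).rank := Matrix.rank_mul_le_left _ _
    _ ≤ Dqubit.rank := Matrix.rank_mul_le_right _ _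
  omega

/-- The qubit X,Y,Z data table has rank 4, so any ontological factorization of it requires
at least 4 ontic states. -/
theorem stmt_11 :
    Dqubit.rank = 4 ∧
    ∀ (Ω : ℕ) (M : Matrix (Fin 6) (Fin Ω) ℝ) (P : Matrix (Fin Ω) (Fin 6) ℝ),
      (∀ i j, 0 ≤ M i j ∧ M i j ≤ 1) →
      (∀ j k, 0 ≤ P j k) → (∀ k, ∑ j, P j k = 1) →
      (∀ (j : Fin Ω) (a : Fin 3),
        M ⟨2 * a.val, by have := a.isLt; omega⟩ j
          + M ⟨2 * a.val + 1, by have := a.isLt; omega⟩ j = 1) →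
      Dqubit = M * P →
      4 ≤ Ω := by
  refine ⟨rankD, ?_⟩
  intro Ω M P _ _ _ _ hMP
  calc (4 : ℕ) = Dqubit.rank := rankD.symm
  _ = (M * P).rank := by rw [hMP]
  _ ≤ M.rank := Matrix.rank_mul_le_left M P
  _ ≤ Fintype.card (Fin Ω) := M.rank_le_card_width
  _ = Ω := by simp
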